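/- Define, for injections p : [k] → [x] (monotone) and q : [k] → [y] (monotone) and an injection f : [x] → [y], the block matrix V(f) over a monoid of k×k matrices, whose (p,q)-block is W(ξ(f∘p)) if ν(f∘p) = q and 0 otherwise, where W : S_k → Mat(ℚ) is a contravariant matrix representation satisfying W(σ)·W(τ) = W(τ∘σ). Then V(f)·V(g) = V(g∘f) for all injections f : [x] → [y] and g : [y] → [z]. -/

import Mathlib

open scoped Classical

/-- `ξ(h)`: the unique permutation such that `h ∘ ξ(h)⁻¹` is (strictly) monotone
(for `h` injective). -/
noncomputable def xi {k n : ℕ} (h : Fin k → Fin n) : Equiv.Perm (Fin k) :=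
  (Tuple.sort h)⁻¹

/-- `ν(h) = h ∘ ξ(h)⁻¹`: the monotone rearrangement of `h`. -/
noncomputable def nu {k n : ℕ} (h : Fin k → Fin n) : Fin k → Fin n :=
  h ∘ (xi h).symm

/-- The block matrix `V(f)` of the induced FI-module, with rows indexed by
`OI(k,x) × [d]` and columns by `OI(k,y) × [d]`: the `(p,q)`-block is
`W(ξ(f ∘ p))` if `ν(f ∘ p) = q`, and `0` otherwise. -/
noncomputable def Vmat {k d x y : ℕ} (W : Equiv.Perm (Fin k) → Matrix (Fin d) (Fin d) ℚ)
    (f : Fin x → Fin y) :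
    Matrix ({p : Fin k → Fin x // StrictMono p} × Fin d)
           ({q : Fin k → Fin y // StrictMono q} × Fin d) ℚ :=
  fun pi qj =>
    if nu (f ∘ pi.1.1) = qj.1.1 then W (xi (f ∘ pi.1.1)) pi.2 qj.2 else 0

lemma sort_eq_of_monotone {k n : ℕ} {h : Fin k → Fin n} (hinj : Function.Injective h)
    (σ : Equiv.Perm (Fin k)) (hmono : Monotone (h ∘ σ)) : σ = Tuple.sort h := by
  rw [Tuple.eq_sort_iff]
  refine ⟨hmono, fun i j hij heq => absurd (σ.injective (hinj heq) ▸ hij) (lt_irrefl _)⟩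

lemma xi_comp {k n : ℕ} {h : Fin k → Fin n} (hinj : Function.Injective h)
    (σ : Equiv.Perm (Fin k)) : xi (h ∘ σ) = xi h * σ := by
  have hinj' : Function.Injective (h ∘ σ) := hinj.comp σ.injective
  have : (σ⁻¹ * Tuple.sort h) = Tuple.sort (h ∘ σ) := by
    apply sort_eq_of_monotone hinj'
    have : (h ∘ ⇑σ) ∘ ⇑(σ⁻¹ * Tuple.sort h) = h ∘ Tuple.sort h := by
      funext i; simp [Equiv.Perm.mul_apply]
    rw [this]
    exact Tuple.monotone_sort h
  rw [xi, xi, ← this, mul_inv_rev, inv_inv]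

lemma nu_comp {k n : ℕ} {h : Fin k → Fin n} (hinj : Function.Injective h)
    (σ : Equiv.Perm (Fin k)) : nu (h ∘ σ) = nu h := by
  rw [nu, nu, xi_comp hinj σ]
  funext i
  simp [← Equiv.Perm.inv_def, mul_inv_rev, Equiv.Perm.mul_apply]

lemma nu_eq {k n : ℕ} (h : Fin k → Fin n) : nu h = h ∘ Tuple.sort h := by
  funext i; simp [nu, xi, ← Equiv.Perm.inv_def]

lemma nu_strictMono {k n : ℕ} {h : Fin k → Fin n} (hinj : Function.Injective h) :
    StrictMono (nu h) := by
  rw [nu_eq]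
  exact (Tuple.monotone_sort h).strictMono_of_injective (hinj.comp (Tuple.sort h).injective)

lemma nu_comp_xi {k n : ℕ} (h : Fin k → Fin n) : nu h ∘ ⇑(xi h) = h := by
  funext i; simp [nu]

/-- Lemma (rep): `V(f) · V(g) = V(g ∘ f)` whenever `W` is a contravariant matrix
representation of the symmetric group `S_k`. -/
theorem stmt11 (k d x y z : ℕ) (W : Equiv.Perm (Fin k) → Matrix (Fin d) (Fin d) ℚ)
    (hW : ∀ σ τ : Equiv.Perm (Fin k), W σ * W τ = W (τ * σ))
    (f : Fin x → Fin y) (hf : Function.Injective f)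
    (g : Fin y → Fin z) (hg : Function.Injective g) :
    Vmat W f * Vmat W g = Vmat W (g ∘ f) := by
  ext ⟨⟨p, hp⟩, i⟩ ⟨⟨r, hr⟩, j⟩
  have hfp : Function.Injective (f ∘ p) := hf.comp hp.injective
  set q : Fin k → Fin y := nu (f ∘ p) with hq
  have hqs : StrictMono q := nu_strictMono hfp
  have hgq : Function.Injective (g ∘ q) := hg.comp hqs.injective
  have hdecomp : g ∘ f ∘ p = (g ∘ q) ∘ ⇑(xi (f ∘ p)) := by
    rw [hq, Function.comp_assoc, nu_comp_xi]
  have hxi : xi (g ∘ f ∘ p) = xi (g ∘ q) * xi (f ∘ p) := by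
    rw [hdecomp, xi_comp hgq]
  have hnu : nu (g ∘ f ∘ p) = nu (g ∘ q) := by
    rw [hdecomp, nu_comp hgq]
  rw [Matrix.mul_apply]
  rw [Fintype.sum_prod_type]
  rw [Finset.sum_eq_single (⟨q, hqs⟩ : {q : Fin k → Fin y // StrictMono q})]
  · simp only [Vmat, if_pos rfl]
    by_cases hcond : nu (g ∘ q) = r
    · have : nu ((g ∘ f) ∘ p) = r := by
        rw [show (g ∘ f) ∘ p = g ∘ f ∘ p from rfl, hnu, hcond]
      rw [if_pos this]
      have := congrFun (congrFun (hW (xi (f ∘ p)) (xi (g ∘ q))) i) j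
      rw [Matrix.mul_apply] at this
      simp only [if_pos hcond, if_true, if_pos hq.symm]
      rw [this, show (g ∘ f) ∘ p = g ∘ f ∘ p from rfl, hxi]
    · have : ¬ nu ((g ∘ f) ∘ p) = r := by
        rw [show (g ∘ f) ∘ p = g ∘ f ∘ p from rfl, hnu]; exact hcond
      rw [if_neg this]
      simp [Vmat, if_neg hcond]
  · intro b _ hb
    apply Finset.sum_eq_zero
    intro m _
    have : ¬ nu (f ∘ p) = b.1 := by
      intro hc; exact hb (Subtype.ext hc.symm)
    simp [Vmat, if_neg this]
  · intro hmem; exact absurd (Finset.mem_univ _) hmem
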